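/- For any single symmetric matrix B ∈ S^n, each of the sets J_+(B) = {X ∈ S^n_+ : ⟨B,X⟩ ≥ 0}, J_-(B) = {X ∈ S^n_+ : ⟨B,X⟩ ≤ 0}, and J_0(B) = {X ∈ S^n_+ : ⟨B,X⟩ = 0} equals the convex hull of its intersection with the rank-one matrices Γ^n. -/

import Mathlib

open Matrix

/-- Γ^n = {x xᵀ : x ∈ ℝ^n}. -/
def Gamma (n : ℕ) : Set (Matrix (Fin n) (Fin n) ℝ) :=
  {X | ∃ x : Fin n → ℝ, X = vecMulVec x x}

/-- J_+(B) = {X ∈ S^n_+ : ⟨B,X⟩ ≥ 0}. -/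
def Jp {n : ℕ} (B : Matrix (Fin n) (Fin n) ℝ) : Set (Matrix (Fin n) (Fin n) ℝ) :=
  {X | X.PosSemidef ∧ 0 ≤ (B * X).trace}

/-- J_-(B) = {X ∈ S^n_+ : ⟨B,X⟩ ≤ 0}. -/
def Jm {n : ℕ} (B : Matrix (Fin n) (Fin n) ℝ) : Set (Matrix (Fin n) (Fin n) ℝ) :=
  {X | X.PosSemidef ∧ (B * X).trace ≤ 0}

/-- J_0(B) = {X ∈ S^n_+ : ⟨B,X⟩ = 0}. -/
def J0 {n : ℕ} (B : Matrix (Fin n) (Fin n) ℝ) : Set (Matrix (Fin n) (Fin n) ℝ) :=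
  {X | X.PosSemidef ∧ (B * X).trace = 0}

namespace Stmt4Aux

variable {n : ℕ}

/-- quadratic form of `B` -/
noncomputable def qf (B : Matrix (Fin n) (Fin n) ℝ) (v : Fin n → ℝ) : ℝ :=
  v ⬝ᵥ B.mulVec v

lemma trace_mul_vecMulVec (B : Matrix (Fin n) (Fin n) ℝ) (x : Fin n → ℝ) :
    (B * vecMulVec x x).trace = qf B x := by
  simp only [Matrix.trace, Matrix.diag, Matrix.mul_apply, vecMulVec_apply, qf, dotProduct,
    mulVec, Finset.mul_sum]
  exact Finset.sum_congr rfl fun i _ => Finset.sum_congr rfl fun j _ => by ring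

lemma posSemidef_outer (x : Fin n → ℝ) : (vecMulVec x x).PosSemidef := by
  refine PosSemidef.of_dotProduct_mulVec_nonneg ?_ ?_
  · ext i j
    simp [vecMulVec_apply, conjTranspose_apply, mul_comm]
  · intro y
    have h : star y ⬝ᵥ (vecMulVec x x) *ᵥ y = (x ⬝ᵥ y) * (x ⬝ᵥ y) := by
      simp only [star_trivial, dotProduct, mulVec, vecMulVec_apply, Finset.mul_sum,
        Finset.sum_mul]
      rw [Finset.sum_comm]
      exact Finset.sum_congr rfl fun i _ => Finset.sum_congr rfl fun j _ => by ring
    rw [h]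
    exact mul_self_nonneg _

lemma exists_sum_outer {X : Matrix (Fin n) (Fin n) ℝ} (hX : X.PosSemidef) :
    ∃ v : Fin n → (Fin n → ℝ), X = ∑ i, vecMulVec (v i) (v i) := by
  open scoped MatrixOrder in
  obtain ⟨A, rfl⟩ := CStarAlgebra.nonneg_iff_eq_star_mul_self.mp hX.nonneg
  refine ⟨fun i => A i, ?_⟩
  ext i j
  simp [Matrix.mul_apply, conjTranspose_apply, vecMulVec_apply, Matrix.sum_apply, mul_comm]

lemma dot_swap {B : Matrix (Fin n) (Fin n) ℝ} (hB : B.IsSymm) (v w : Fin n → ℝ) :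
    w ⬝ᵥ B *ᵥ v = v ⬝ᵥ B *ᵥ w := by
  simp only [dotProduct, mulVec, Finset.mul_sum]
  rw [Finset.sum_comm]
  refine Finset.sum_congr rfl fun i _ => Finset.sum_congr rfl fun j _ => ?_
  rw [hB.apply]
  ring

lemma qf_comb {B : Matrix (Fin n) (Fin n) ℝ} (hB : B.IsSymm) (c d : ℝ) (v w : Fin n → ℝ) :
    qf B (c • v + d • w)
      = c ^ 2 * qf B v + 2 * (c * d) * (v ⬝ᵥ B *ᵥ w) + d ^ 2 * qf B w := by
  simp only [qf, mulVec_add, mulVec_smul, dotProduct_add, add_dotProduct, dotProduct_smul,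
    smul_dotProduct, smul_eq_mul]
  rw [dot_swap hB w v]
  ring

lemma rotate {B : Matrix (Fin n) (Fin n) ℝ} (hB : B.IsSymm) {v w : Fin n → ℝ}
    (h : qf B v * qf B w < 0) :
    ∃ u u' : Fin n → ℝ, qf B u = 0 ∧ qf B u' = qf B v + qf B w ∧
      vecMulVec u u + vecMulVec u' u' = vecMulVec v v + vecMulVec w w := by
  set a := qf B v with ha
  set b := qf B w with hbdef
  set r := v ⬝ᵥ B *ᵥ w with hr
  have hb : b ≠ 0 := by rintro h0; rw [h0, mul_zero] at h; exact lt_irrefl 0 h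
  set s := Real.sqrt (r ^ 2 - a * b) with hsdef
  have hs : s ^ 2 = r ^ 2 - a * b := Real.sq_sqrt (by nlinarith [sq_nonneg r])
  set t := (-r + s) / b with htdef
  have htb : t * b = -r + s := div_mul_cancel₀ _ hb
  have ht0 : b * t ^ 2 + 2 * r * t + a = 0 := by
    have hkey : (b * t ^ 2 + 2 * r * t + a) * b = 0 := by
      linear_combination (t * b + r + s) * htb + hs
    rcases mul_eq_zero.mp hkey with h' | h'
    · exact h'
    · exact absurd h' hb
  have h1t : (0:ℝ) < 1 + t ^ 2 := by positivity
  set c := (Real.sqrt (1 + t ^ 2))⁻¹ with hcdef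
  have hc : c ^ 2 * (1 + t ^ 2) = 1 := by
    rw [hcdef, inv_pow, Real.sq_sqrt h1t.le]
    exact inv_mul_cancel₀ h1t.ne'
  refine ⟨c • v + (c * t) • w, (-(c * t)) • v + c • w, ?_, ?_, ?_⟩
  · rw [qf_comb hB]
    linear_combination c ^ 2 * ht0
  · rw [qf_comb hB]
    linear_combination (-(c ^ 2)) * ht0 + (a + b) * hc
  · ext i j
    simp only [Matrix.add_apply, vecMulVec_apply, Pi.add_apply, Pi.smul_apply, smul_eq_mul]
    linear_combination (v i * v j + w i * w j) * hc

lemma sum_update_update {M : Type*} [AddCommMonoid M] {m : ℕ} (g : (Fin n → ℝ) → M)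
    (v : Fin m → (Fin n → ℝ)) {i j : Fin m} (hij : i ≠ j) (u u' : Fin n → ℝ)
    (hg : g u + g u' = g (v i) + g (v j)) :
    ∑ k, g (Function.update (Function.update v i u) j u' k) = ∑ k, g (v k) := by
  classical
  have key : ∀ f : Fin m → M, ∑ k, f k
      = f j + (f i + ∑ k ∈ (Finset.univ.erase j).erase i, f k) := by
    intro f
    rw [← Finset.add_sum_erase _ f (Finset.mem_univ j),
      ← Finset.add_sum_erase _ f (Finset.mem_erase.mpr ⟨hij, Finset.mem_univ i⟩)]
  rw [key, key]
  have e1 : Function.update (Function.update v i u) j u' j = u' := Function.update_self _ _ _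
  have e2 : Function.update (Function.update v i u) j u' i = u := by
    rw [Function.update_of_ne hij, Function.update_self]
  have e3 : ∀ k ∈ (Finset.univ.erase j).erase i,
      Function.update (Function.update v i u) j u' k = v k := by
    intro k hk
    rw [Finset.mem_erase, Finset.mem_erase] at hk
    rw [Function.update_of_ne hk.2.1, Function.update_of_ne hk.1]
  rw [e1, e2, Finset.sum_congr rfl fun k hk => congrArg g (e3 k hk)]
  have : g u' + g u = g (v j) + g (v i) := by
    rw [add_comm (g u'), hg, add_comm]
  rw [← add_assoc, ← add_assoc, this]

/-- key step: replace a mixed-sign pair by a pair with one zero. -/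
lemma step {B : Matrix (Fin n) (Fin n) ℝ} (hB : B.IsSymm) {m : ℕ}
    (v : Fin m → (Fin n → ℝ)) {i j : Fin m} (hij : i ≠ j)
    (hprod : qf B (v i) * qf B (v j) < 0) :
    ∃ v' : Fin m → (Fin n → ℝ),
      qf B (v' i) = 0 ∧
      (∀ k, k ≠ i → k ≠ j → v' k = v k) ∧
      (∑ k, qf B (v' k)) = ∑ k, qf B (v k) ∧
      (∑ k, vecMulVec (v' k) (v' k)) = ∑ k, vecMulVec (v k) (v k) := by
  obtain ⟨u, u', hu0, hu', houter⟩ := rotate hB hprod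
  refine ⟨Function.update (Function.update v i u) j u', ?_, ?_, ?_, ?_⟩
  · rw [Function.update_of_ne hij, Function.update_self, hu0]
  · intro k hki hkj
    rw [Function.update_of_ne hkj, Function.update_of_ne hki]
  · exact sum_update_update (qf B) v hij u u' (by rw [hu0, hu']; ring)
  · exact sum_update_update (fun x => vecMulVec x x) v hij u u' houter

lemma card_bound {B : Matrix (Fin n) (Fin n) ℝ} {m N : ℕ}
    {v v' : Fin m → (Fin n → ℝ)} {i j : Fin m}
    (hcard : (Finset.univ.filter fun k => qf B (v k) ≠ 0).card ≤ N + 1)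
    (hvi : qf B (v i) ≠ 0) (hvj : qf B (v j) ≠ 0)
    (hi0 : qf B (v' i) = 0) (hother : ∀ k, k ≠ i → k ≠ j → v' k = v k) :
    (Finset.univ.filter fun k => qf B (v' k) ≠ 0).card ≤ N := by
  classical
  have hsub : (Finset.univ.filter fun k => qf B (v' k) ≠ 0)
      ⊆ (Finset.univ.filter fun k => qf B (v k) ≠ 0).erase i := by
    intro k hk
    rw [Finset.mem_filter] at hk
    rw [Finset.mem_erase, Finset.mem_filter]
    have hki : k ≠ i := by rintro rfl; exact hk.2 hi0
    refine ⟨hki, Finset.mem_univ k, ?_⟩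
    rcases eq_or_ne k j with rfl | hkj
    · exact hvj
    · rw [← hother k hki hkj]; exact hk.2
  have h1 := Finset.card_le_card hsub
  rw [Finset.card_erase_of_mem (Finset.mem_filter.mpr ⟨Finset.mem_univ i, hvi⟩)] at h1
  omega

lemma decompP {B : Matrix (Fin n) (Fin n) ℝ} (hB : B.IsSymm) {m : ℕ} :
    ∀ (N : ℕ) (v : Fin m → (Fin n → ℝ)),
      (Finset.univ.filter fun i => qf B (v i) ≠ 0).card ≤ N →
      0 ≤ ∑ i, qf B (v i) →
      ∃ w : Fin m → (Fin n → ℝ), (∀ i, 0 ≤ qf B (w i)) ∧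
        ∑ i, vecMulVec (w i) (w i) = ∑ i, vecMulVec (v i) (v i) := by
  intro N
  induction N with
  | zero =>
    intro v hcard _
    refine ⟨v, fun i => ?_, rfl⟩
    by_contra h
    have hi : i ∈ Finset.univ.filter fun i => qf B (v i) ≠ 0 :=
      Finset.mem_filter.mpr ⟨Finset.mem_univ i, fun h0 => h (le_of_eq h0.symm)⟩
    have := Finset.card_pos.mpr ⟨i, hi⟩
    omega
  | succ N ih =>
    intro v hcard hsum
    by_cases hall : ∀ i, 0 ≤ qf B (v i)
    · exact ⟨v, hall, rfl⟩
    push_neg at hall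
    obtain ⟨i, hi⟩ := hall
    have hj : ∃ j, 0 < qf B (v j) := by
      by_contra hcon
      push_neg at hcon
      have : ∑ k, qf B (v k) < ∑ _k : Fin m, (0:ℝ) :=
        Finset.sum_lt_sum (fun k _ => hcon k) ⟨i, Finset.mem_univ i, hi⟩
      rw [Finset.sum_const_zero] at this
      linarith
    obtain ⟨j, hj⟩ := hj
    have hij : i ≠ j := by rintro rfl; linarith
    obtain ⟨v', hi0, hother, hsq, hso⟩ := step hB v hij (mul_neg_of_neg_of_pos hi hj)
    have hcard' := card_bound hcard (ne_of_lt hi) (ne_of_gt hj) hi0 hother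
    obtain ⟨w, hw, hwsum⟩ := ih v' hcard' (by rw [hsq]; exact hsum)
    exact ⟨w, hw, hwsum.trans hso⟩

lemma decompZ {B : Matrix (Fin n) (Fin n) ℝ} (hB : B.IsSymm) {m : ℕ} :
    ∀ (N : ℕ) (v : Fin m → (Fin n → ℝ)),
      (Finset.univ.filter fun i => qf B (v i) ≠ 0).card ≤ N →
      ∑ i, qf B (v i) = 0 →
      ∃ w : Fin m → (Fin n → ℝ), (∀ i, qf B (w i) = 0) ∧
        ∑ i, vecMulVec (w i) (w i) = ∑ i, vecMulVec (v i) (v i) := by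
  intro N
  induction N with
  | zero =>
    intro v hcard _
    refine ⟨v, fun i => ?_, rfl⟩
    by_contra h
    have hi : i ∈ Finset.univ.filter fun i => qf B (v i) ≠ 0 :=
      Finset.mem_filter.mpr ⟨Finset.mem_univ i, h⟩
    have := Finset.card_pos.mpr ⟨i, hi⟩
    omega
  | succ N ih =>
    intro v hcard hsum
    by_cases hall : ∀ i, qf B (v i) = 0
    · exact ⟨v, hall, rfl⟩
    push_neg at hall
    obtain ⟨i, hi⟩ := hall
    have hj : ∃ j, qf B (v i) * qf B (v j) < 0 := by
      rcases lt_or_gt_of_ne hi with hneg | hpos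
      · by_contra hcon
        push_neg at hcon
        have hpos' : ∀ j, qf B (v j) ≤ 0 := by
          intro j
          by_contra hj'
          push_neg at hj'
          have := hcon j
          nlinarith
        have : ∑ k, qf B (v k) < ∑ _k : Fin m, (0:ℝ) :=
          Finset.sum_lt_sum (fun k _ => hpos' k) ⟨i, Finset.mem_univ i, hneg⟩
        rw [Finset.sum_const_zero] at this
        linarith
      · by_contra hcon
        push_neg at hcon
        have hpos' : ∀ j, 0 ≤ qf B (v j) := by
          intro j
          by_contra hj'
          push_neg at hj'
          have := hcon j
          nlinarith
        have : ∑ _k : Fin m, (0:ℝ) < ∑ k, qf B (v k) :=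
          Finset.sum_lt_sum (fun k _ => hpos' k) ⟨i, Finset.mem_univ i, hpos⟩
        rw [Finset.sum_const_zero] at this
        linarith
    obtain ⟨j, hj⟩ := hj
    have hij : i ≠ j := by rintro rfl; nlinarith
    have hvj : qf B (v j) ≠ 0 := by rintro h0; rw [h0, mul_zero] at hj; exact lt_irrefl 0 hj
    obtain ⟨v', hi0, hother, hsq, hso⟩ := step hB v hij hj
    have hcard' := card_bound hcard hi hvj hi0 hother
    obtain ⟨w, hw, hwsum⟩ := ih v' hcard' (by rw [hsq]; exact hsum)
    exact ⟨w, hw, hwsum.trans hso⟩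

lemma posSemidef_smul {X : Matrix (Fin n) (Fin n) ℝ} (hX : X.PosSemidef) {c : ℝ}
    (hc : 0 ≤ c) : (c • X).PosSemidef := by
  refine PosSemidef.of_dotProduct_mulVec_nonneg ?_ ?_
  · ext i j
    simp only [conjTranspose_apply, Matrix.smul_apply, smul_eq_mul, star_trivial]
    rw [← hX.1.apply i j]
    simp
  · intro y
    rw [smul_mulVec, dotProduct_smul, smul_eq_mul]
    exact mul_nonneg hc (hX.dotProduct_mulVec_nonneg y)

lemma trace_mul_smul (B X : Matrix (Fin n) (Fin n) ℝ) (c : ℝ) :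
    (B * (c • X)).trace = c * (B * X).trace := by
  rw [Matrix.mul_smul, Matrix.trace_smul, smul_eq_mul]

lemma smul_outer (c : ℝ) (hc : 0 ≤ c) (x : Fin n → ℝ) :
    c • vecMulVec x x = vecMulVec (Real.sqrt c • x) (Real.sqrt c • x) := by
  ext i j
  simp only [Matrix.smul_apply, vecMulVec_apply, Pi.smul_apply, smul_eq_mul]
  have h := Real.mul_self_sqrt hc
  linear_combination (-(x i * x j)) * h

lemma sum_mem_hull {S : Set (Matrix (Fin n) (Fin n) ℝ)} (h0 : (0 : Matrix (Fin n) (Fin n) ℝ) ∈ S)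
    (hsmul : ∀ c : ℝ, 0 ≤ c → ∀ X ∈ S, c • X ∈ S) {m : ℕ} (f : Fin m → Matrix (Fin n) (Fin n) ℝ)
    (hf : ∀ i, f i ∈ S) : (∑ i, f i) ∈ convexHull ℝ S := by
  rcases Nat.eq_zero_or_pos m with rfl | hm
  · simpa using subset_convexHull ℝ S h0
  · have hm' : (0:ℝ) < (m:ℝ) := by exact_mod_cast hm
    have hmem := (convex_convexHull ℝ S).sum_mem (t := Finset.univ)
      (w := fun _ : Fin m => (m : ℝ)⁻¹) (z := fun i => (m : ℝ) • f i)
      (fun _ _ => inv_nonneg.mpr hm'.le)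
      (by simp [Finset.sum_const, Finset.card_univ, mul_comm]
          field_simp)
      (fun i _ => subset_convexHull ℝ S (hsmul (m:ℝ) hm'.le (f i) (hf i)))
    have : ∑ i, (m:ℝ)⁻¹ • ((m:ℝ) • f i) = ∑ i, f i := by
      refine Finset.sum_congr rfl fun i _ => ?_
      rw [smul_smul, inv_mul_cancel₀ hm'.ne', one_smul]
    rwa [this] at hmem

lemma jpHull (B : Matrix (Fin n) (Fin n) ℝ) (hB : B.IsSymm) :
    convexHull ℝ (Jp B ∩ Gamma n) = Jp B := by
  apply Set.Subset.antisymm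
  · refine convexHull_min Set.inter_subset_left ?_
    intro X hX Y hY a b ha hb hab
    refine ⟨(posSemidef_smul hX.1 ha).add (posSemidef_smul hY.1 hb), ?_⟩
    rw [Matrix.mul_add, Matrix.trace_add, trace_mul_smul, trace_mul_smul]
    exact add_nonneg (mul_nonneg ha hX.2) (mul_nonneg hb hY.2)
  · intro X hX
    obtain ⟨v, rfl⟩ := exists_sum_outer hX.1
    have htr : (B * ∑ i, vecMulVec (v i) (v i)).trace = ∑ i, qf B (v i) := by
      rw [Finset.mul_sum, Matrix.trace_sum]
      exact Finset.sum_congr rfl fun i _ => trace_mul_vecMulVec B (v i)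
    obtain ⟨w, hw, hwsum⟩ := decompP hB _ v le_rfl (by rw [← htr]; exact hX.2)
    rw [← hwsum]
    refine sum_mem_hull ?_ ?_ _ ?_
    · exact ⟨⟨Matrix.PosSemidef.zero, by simp⟩, 0, by ext i j; simp [vecMulVec_apply]⟩
    · rintro c hc Y ⟨⟨hY1, hY2⟩, x, rfl⟩
      rw [smul_outer c hc x]
      refine ⟨⟨posSemidef_outer _, ?_⟩, _, rfl⟩
      rw [← smul_outer c hc x, trace_mul_smul]
      exact mul_nonneg hc hY2
    · intro i
      refine ⟨⟨posSemidef_outer _, ?_⟩, _, rfl⟩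
      rw [trace_mul_vecMulVec]
      exact hw i

lemma j0Hull (B : Matrix (Fin n) (Fin n) ℝ) (hB : B.IsSymm) :
    convexHull ℝ (J0 B ∩ Gamma n) = J0 B := by
  apply Set.Subset.antisymm
  · refine convexHull_min Set.inter_subset_left ?_
    intro X hX Y hY a b ha hb hab
    refine ⟨(posSemidef_smul hX.1 ha).add (posSemidef_smul hY.1 hb), ?_⟩
    rw [Matrix.mul_add, Matrix.trace_add, trace_mul_smul, trace_mul_smul, hX.2, hY.2]
    ring
  · intro X hX
    obtain ⟨v, rfl⟩ := exists_sum_outer hX.1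
    have htr : (B * ∑ i, vecMulVec (v i) (v i)).trace = ∑ i, qf B (v i) := by
      rw [Finset.mul_sum, Matrix.trace_sum]
      exact Finset.sum_congr rfl fun i _ => trace_mul_vecMulVec B (v i)
    obtain ⟨w, hw, hwsum⟩ := decompZ hB _ v le_rfl (by rw [← htr]; exact hX.2)
    rw [← hwsum]
    refine sum_mem_hull ?_ ?_ _ ?_
    · exact ⟨⟨Matrix.PosSemidef.zero, by simp⟩, 0, by ext i j; simp [vecMulVec_apply]⟩
    · rintro c hc Y ⟨⟨hY1, hY2⟩, x, rfl⟩
      rw [smul_outer c hc x]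
      refine ⟨⟨posSemidef_outer _, ?_⟩, _, rfl⟩
      rw [← smul_outer c hc x, trace_mul_smul, hY2, mul_zero]
    · intro i
      refine ⟨⟨posSemidef_outer _, ?_⟩, _, rfl⟩
      rw [trace_mul_vecMulVec]
      exact hw i

lemma jm_eq_jp_neg (B : Matrix (Fin n) (Fin n) ℝ) : Jm B = Jp (-B) := by
  ext X
  simp only [Jm, Jp, Set.mem_setOf_eq, Matrix.neg_mul, Matrix.trace_neg]
  constructor
  · rintro ⟨h1, h2⟩; exact ⟨h1, by linarith⟩
  · rintro ⟨h1, h2⟩; exact ⟨h1, by linarith⟩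

end Stmt4Aux

theorem stmt4 {n : ℕ} (B : Matrix (Fin n) (Fin n) ℝ) (hB : B.IsSymm) :
    convexHull ℝ (Jp B ∩ Gamma n) = Jp B ∧
    convexHull ℝ (Jm B ∩ Gamma n) = Jm B ∧
    convexHull ℝ (J0 B ∩ Gamma n) = J0 B := by
  refine ⟨Stmt4Aux.jpHull B hB, ?_, Stmt4Aux.j0Hull B hB⟩
  rw [Stmt4Aux.jm_eq_jp_neg B]
  exact Stmt4Aux.jpHull (-B) (by rw [Matrix.IsSymm, Matrix.transpose_neg, hB])
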